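/- Let k be a field of characteristic 2 and let r, s be nonzero elements of k. Let A = L_r and B = L_s, where L_p denotes the 2×2 matrix with rows (0,1) and (p,0). Then the k-involutions Inn_A and Inn_B of SL(2,k) are isomorphic (i.e., there exists C ∈ GL(2,k) with Inn_C ∘ Inn_A ∘ Inn_C⁻¹ = Inn_B on SL(2,k)) if and only if r/s is a square in k*, i.e., there exists a nonzero t ∈ k with r = t²·s. -/

import Mathlib

/-- Let k be a field of characteristic 2 and r, s ∈ k nonzero.
With A = L_r = !![0,1;r,0] and B = L_s, the k-involutions Inn_A and Inn_B of
SL(2,k) are isomorphic (∃ C ∈ GL(2,k), Inn_C ∘ Inn_A ∘ Inn_C⁻¹ = Inn_B on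
SL(2,k)) iff r/s is a square in k*, i.e. ∃ t ≠ 0 with r = t²·s. -/
theorem stmt_4 {k : Type*} [Field k] [CharP k 2] (r s : k) (hr : r ≠ 0) (hs : s ≠ 0) :
    (∃ C : (Matrix (Fin 2) (Fin 2) k)ˣ, ∀ X : Matrix (Fin 2) (Fin 2) k, X.det = 1 →
        (C : Matrix (Fin 2) (Fin 2) k) *
          (!![(0 : k), 1; r, 0] *
            ((↑C⁻¹ : Matrix (Fin 2) (Fin 2) k) * X * (C : Matrix (Fin 2) (Fin 2) k)) *
            (!![(0 : k), 1; r, 0])⁻¹) *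
          (↑C⁻¹ : Matrix (Fin 2) (Fin 2) k) =
        !![(0 : k), 1; s, 0] * X * (!![(0 : k), 1; s, 0])⁻¹) ↔
      ∃ t : k, t ≠ 0 ∧ r = t ^ 2 * s := by
  have hAinv : (!![(0 : k), 1; r, 0])⁻¹ = !![(0:k), r⁻¹; 1, 0] := by
    apply Matrix.inv_eq_right_inv
    ext i j
    fin_cases i <;> fin_cases j <;>
      simp [Matrix.mul_apply, Fin.sum_univ_two, Matrix.one_apply] <;> field_simp
  have hBinv : (!![(0 : k), 1; s, 0])⁻¹ = !![(0:k), s⁻¹; 1, 0] := by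
    apply Matrix.inv_eq_right_inv
    ext i j
    fin_cases i <;> fin_cases j <;>
      simp [Matrix.mul_apply, Fin.sum_univ_two, Matrix.one_apply] <;> field_simp
  constructor
  · rintro ⟨C, h⟩
    set Cm : Matrix (Fin 2) (Fin 2) k := ↑C with hCm
    set Ci : Matrix (Fin 2) (Fin 2) k := ↑C⁻¹ with hCi
    have hc1 : Cm * Ci = 1 := by rw [hCm, hCi]; exact_mod_cast Units.mul_inv C
    have hc2 : Ci * Cm = 1 := by rw [hCm, hCi]; exact_mod_cast Units.inv_mul C
    set A : Matrix (Fin 2) (Fin 2) k := !![(0 : k), 1; r, 0] with hA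
    set Ai : Matrix (Fin 2) (Fin 2) k := !![(0:k), r⁻¹; 1, 0] with hAi
    set B : Matrix (Fin 2) (Fin 2) k := !![(0 : k), 1; s, 0] with hB
    set Bi : Matrix (Fin 2) (Fin 2) k := !![(0:k), s⁻¹; 1, 0] with hBi
    have hAA : A * Ai = 1 := by rw [← hAinv]; exact Matrix.mul_nonsing_inv _ (by
      simp [hA, Matrix.det_fin_two_of]; exact hr)
    have hAA' : Ai * A = 1 := by rw [← hAinv]; exact Matrix.nonsing_inv_mul _ (by
      simp [hA, Matrix.det_fin_two_of]; exact hr)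
    have hBB : B * Bi = 1 := by rw [← hBinv]; exact Matrix.mul_nonsing_inv _ (by
      simp [hB, Matrix.det_fin_two_of]; exact hs)
    have hBB' : Bi * B = 1 := by rw [← hBinv]; exact Matrix.nonsing_inv_mul _ (by
      simp [hB, Matrix.det_fin_two_of]; exact hs)
    set M : Matrix (Fin 2) (Fin 2) k := Bi * Cm * A * Ci with hM
    have key : ∀ X : Matrix (Fin 2) (Fin 2) k, X.det = 1 → M * X = X * M := by
      intro X hX
      have e := h X hX
      rw [hAinv, hBinv] at e
      have e1 := congrArg (fun Y => Bi * Y * (Cm * A * Ci)) e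
      simp only [mul_assoc] at e1 ⊢
      rw [hM]
      simp only [mul_assoc]
      calc Bi * (Cm * (A * (Ci * X))) 
          = Bi * (Cm * (A * (Ci * (X * (Cm * (Ai * (Ci * (Cm * (A * Ci))))))))) := by
            rw [show Ci * (Cm * (A * Ci)) = A * Ci by rw [← mul_assoc, hc2, one_mul],
              show Ai * (A * Ci) = Ci by rw [← mul_assoc, hAA', one_mul],
              show Cm * Ci = 1 from hc1, mul_one]
        _ = Bi * (B * (X * (Bi * (Cm * (A * Ci))))) := e1
        _ = X * (Bi * (Cm * (A * Ci))) := by rw [← mul_assoc, hBB', one_mul]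
    have hE := key !![(1:k),1;0,1] (by simp [Matrix.det_fin_two_of])
    have hF := key !![(1:k),0;1,1] (by simp [Matrix.det_fin_two_of])
    have h10 : M 1 0 = 0 := by
      have := congrFun (congrFun hE 0) 0
      simp [Matrix.mul_apply, Fin.sum_univ_two] at this
      linear_combination this
    have h01 : M 0 1 = 0 := by
      have := congrFun (congrFun hF 1) 1
      simp [Matrix.mul_apply, Fin.sum_univ_two] at this
      linear_combination this
    have h11 : M 1 1 = M 0 0 := by
      have := congrFun (congrFun hE 0) 1
      simp [Matrix.mul_apply, Fin.sum_univ_two] at this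
      linear_combination -this
    set t : k := M 0 0 with ht
    have hscal : M = t • (1 : Matrix (Fin 2) (Fin 2) k) := by
      ext i j
      fin_cases i <;> fin_cases j <;>
        simp [Matrix.smul_apply, Matrix.one_apply, h10, h01, h11, ht]
    have hCA : Cm * A = t • (B * Cm) := by
      have : B * M * Cm = B * (t • 1) * Cm := by rw [hscal]
      rw [hM] at this
      calc Cm * A = B * (Bi * Cm * A * Ci) * Cm := by
            simp only [← mul_assoc, hBB]
            rw [one_mul]
            simp only [mul_assoc]
            rw [hc2, mul_one]
        _ = B * (t • 1) * Cm := this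
        _ = t • (B * Cm) := by rw [mul_smul_comm, mul_one, smul_mul_assoc]
    have hdet := congrArg Matrix.det hCA
    rw [Matrix.det_mul, Matrix.det_smul, Matrix.det_mul] at hdet
    have hdA : A.det = -r := by simp [hA, Matrix.det_fin_two_of]
    have hdB : B.det = -s := by simp [hB, Matrix.det_fin_two_of]
    have hdC : Cm.det ≠ 0 := by
      have : IsUnit Cm.det := (Matrix.isUnit_iff_isUnit_det Cm).mp C.isUnit
      exact this.ne_zero
    rw [hdA, hdB] at hdet
    simp only [Fintype.card_fin] at hdet
    have hrts : r = t ^ 2 * s := by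
      field_simp at hdet
      have h2 : Cm.det * r = Cm.det * (t ^ 2 * s) := by linear_combination (-Cm.det) * hdet
      exact mul_left_cancel₀ hdC h2
    refine ⟨t, ?_, hrts⟩
    intro h0
    rw [h0] at hrts
    simp at hrts
    exact hr (by rw [hrts])
  · rintro ⟨t, ht, hrts⟩
    have hC1 : !![t, 0; 0, (1:k)] * !![t⁻¹, 0; 0, (1:k)] = 1 := by
      ext i j
      fin_cases i <;> fin_cases j <;>
        simp [Matrix.mul_apply, Fin.sum_univ_two, Matrix.one_apply] <;> field_simp
    have hC2 : !![t⁻¹, 0; 0, (1:k)] * !![t, 0; 0, (1:k)] = 1 := by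
      ext i j
      fin_cases i <;> fin_cases j <;>
        simp [Matrix.mul_apply, Fin.sum_univ_two, Matrix.one_apply] <;> field_simp
    refine ⟨⟨!![t, 0; 0, (1:k)], !![t⁻¹, 0; 0, (1:k)], hC1, hC2⟩, ?_⟩
    intro X _
    rw [hAinv, hBinv]
    show !![t, 0; 0, (1:k)] * (_ * (!![t⁻¹, 0; 0, (1:k)] * X * _) * _) * !![t⁻¹, 0; 0, (1:k)] = _
    subst hrts
    ext i j
    fin_cases i <;> fin_cases j <;>
      (simp only [Matrix.mul_apply, Fin.sum_univ_two, Matrix.cons_val', Matrix.cons_val_zero,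
        Matrix.cons_val_one, Matrix.head_cons, Matrix.head_fin_const, Matrix.empty_val',
        Matrix.cons_val_fin_one, Matrix.of_apply, Fin.zero_eta, Fin.mk_one, Fin.isValue]; field_simp; try ring)
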